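/- Let ⋆ be a continuous triangle function on Δ⁺. Then for any F, G ∈ Δ⁺ and x, y in a probabilistic metric space (G,D,⋆) and any probabilistic 1-Lipschitz map f, one has d_L(f(x), f(y)) ≤ max( d_L(D(x,y) ⋆ f(x), f(x)), d_L(D(x,y) ⋆ f(y), f(y)) ). -/

import Mathlib

open Filter Topology

noncomputable section

/-- `Δ⁺`: distribution functions `F : [-∞,∞] → [0,1]`, nondecreasing, left-continuous
on `ℝ`, with `F(-∞)=0`, `F(+∞)=1` and `F(0)=0`. -/
def IsDistFun (F : EReal → ℝ) : Prop :=
  Monotone F ∧ (∀ t, F t ∈ Set.Icc (0:ℝ) 1) ∧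
  (∀ x : ℝ, ContinuousWithinAt F (Set.Iio (x : EReal)) (x : EReal)) ∧
  F ⊥ = 0 ∧ F ⊤ = 1 ∧ F (0 : EReal) = 0

/-- The step function `H_a`. -/
def Hstep (a : ℝ) : EReal → ℝ := fun t => if t ≤ (a : EReal) then 0 else 1

/-- `H₀`. -/
def H0 : EReal → ℝ := Hstep 0

/-- `H_∞`. -/
def Hinf : EReal → ℝ := fun t => if t = ⊤ then 1 else 0

/-- The condition `A(F,G;h)` : for all `t ∈ (0,1/h)`, `G(t) ≤ F(t+h)+h`. -/
def levyCond (F G : EReal → ℝ) (h : ℝ) : Prop :=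
  ∀ t : ℝ, 0 < t → t < 1 / h → G (t : EReal) ≤ F ((t + h : ℝ) : EReal) + h

def levySet (F G : EReal → ℝ) : Set ℝ :=
  {h : ℝ | 0 < h ∧ h ≤ 1 ∧ levyCond F G h ∧ levyCond G F h}

/-- The modified Lévy distance. -/
def dL (F G : EReal → ℝ) : ℝ := sInf (levySet F G)

/-- Weak convergence: pointwise convergence at each (real) continuity point of the limit. -/
def WeakConv (F : ℕ → EReal → ℝ) (G : EReal → ℝ) : Prop :=
  ∀ t : ℝ, ContinuousAt G (t : EReal) →
    Tendsto (fun n => F n (t : EReal)) atTop (𝓝 (G (t : EReal)))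

abbrev TriOp := (EReal → ℝ) → (EReal → ℝ) → (EReal → ℝ)

/-- A triangle function on `Δ⁺`. -/
def IsTriangleFn (star : TriOp) : Prop :=
  (∀ F L, IsDistFun F → IsDistFun L → IsDistFun (star F L)) ∧
  (∀ F L, IsDistFun F → IsDistFun L → star F L = star L F) ∧
  (∀ F L K, IsDistFun F → IsDistFun L → IsDistFun K →
    star F (star L K) = star (star F L) K) ∧
  (∀ F, IsDistFun F → star F H0 = F) ∧
  (∀ F L K, IsDistFun F → IsDistFun L → IsDistFun K → F ≤ L → star F K ≤ star L K)

/-- `⋆` is continuous with respect to weak convergence. -/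
def StarContinuous (star : TriOp) : Prop :=
  ∀ (Fn Ln : ℕ → EReal → ℝ) (F L : EReal → ℝ),
    (∀ n, IsDistFun (Fn n)) → (∀ n, IsDistFun (Ln n)) →
    IsDistFun F → IsDistFun L →
    WeakConv Fn F → WeakConv Ln L →
    WeakConv (fun n => star (Fn n) (Ln n)) (star F L)

/-- `⋆` is sup-continuous. -/
def StarSupContinuous (star : TriOp) : Prop :=
  ∀ (I : Type) (_ : Nonempty I) (F : I → EReal → ℝ) (L : EReal → ℝ),
    (∀ i, IsDistFun (F i)) → IsDistFun L →
    (fun t => ⨆ i, star (F i) L t) = star (fun t => ⨆ i, F i t) L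

/-- A probabilistic metric space `(G, D, ⋆)`. -/
structure PMSpace (G : Type) where
  star : TriOp
  D : G → G → EReal → ℝ
  star_tri : IsTriangleFn star
  D_mem : ∀ p q, IsDistFun (D p q)
  D_eq_iff : ∀ p q, D p q = H0 ↔ p = q
  D_symm : ∀ p q, D p q = D q p
  D_tri : ∀ p q r, star (D p q) (D q r) ≤ D p r

/-- Probabilistic 1-Lipschitz map. -/
def PLip {G : Type} (M : PMSpace G) (f : G → EReal → ℝ) : Prop :=
  (∀ x, IsDistFun (f x)) ∧ ∀ x y, M.star (M.D x y) (f y) ≤ f x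

/-- Probabilistically continuous map. -/
def PCont {G : Type} (M : PMSpace G) (f : G → EReal → ℝ) : Prop :=
  (∀ x, IsDistFun (f x)) ∧
  ∀ (z : G) (zn : ℕ → G),
    WeakConv (fun n => M.D (zn n) z) H0 →
    WeakConv (fun n => f (zn n)) (f z)

/-- The uniform modified Lévy distance `d_∞`. -/
def dInf {G : Type} (f g : G → EReal → ℝ) : ℝ := ⨆ x, dL (f x) (g x)

/-- Probabilistic Cauchy sequence: `D(z_n,z_p)(t) → H₀(t)` for all real `t`. -/
def PCauchy {G : Type} (M : PMSpace G) (z : ℕ → G) : Prop :=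
  ∀ t : ℝ, Tendsto (fun np : ℕ × ℕ => M.D (z np.1) (z np.2) (t : EReal))
    atTop (𝓝 (H0 (t : EReal)))

def PConvTo {G : Type} (M : PMSpace G) (z : ℕ → G) (w : G) : Prop :=
  ∀ t : ℝ, Tendsto (fun n => M.D (z n) w (t : EReal)) atTop (𝓝 (H0 (t : EReal)))

def PComplete {G : Type} (M : PMSpace G) : Prop :=
  ∀ z : ℕ → G, PCauchy M z → ∃ w, PConvTo M z w

/-- Compactness: complete and every strong `t`-neighborhood cover has a finite subcover. -/
def PCompact {G : Type} (M : PMSpace G) : Prop :=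
  PComplete M ∧ ∀ t : ℝ, 0 < t → ∃ A : Finset G, ∀ x : G, ∃ a ∈ A, M.D a x (t : EReal) > 1 - t

lemma levyCond_mono {F G : EReal → ℝ} (hF : Monotone F) {h h' : ℝ} (hh : 0 < h)
    (hle : h ≤ h') (hc : levyCond F G h) : levyCond F G h' := by
  intro t ht ht'
  have hh' : 0 < h' := lt_of_lt_of_le hh hle
  have h1 : (1:ℝ)/h' ≤ 1/h := one_div_le_one_div_of_le hh hle
  have := hc t ht (lt_of_lt_of_le ht' h1)
  calc G (t : EReal) ≤ F ((t + h : ℝ) : EReal) + h := this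
    _ ≤ F ((t + h' : ℝ) : EReal) + h' := by
        have : ((t + h : ℝ) : EReal) ≤ ((t + h' : ℝ) : EReal) := by
          exact_mod_cast (EReal.coe_le_coe_iff.mpr (by linarith))
        exact add_le_add (hF this) hle

lemma levyCond_of_le {F F' G : EReal → ℝ} (hFF : F ≤ F') {h : ℝ}
    (hc : levyCond F G h) : levyCond F' G h := by
  intro t ht ht'
  exact le_trans (hc t ht ht') (add_le_add_left (hFF _) h)

lemma one_mem_levySet {F G : EReal → ℝ} (hF : ∀ t, F t ∈ Set.Icc (0:ℝ) 1)
    (hG : ∀ t, G t ∈ Set.Icc (0:ℝ) 1) : (1:ℝ) ∈ levySet F G := by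
  refine ⟨one_pos, le_refl 1, ?_, ?_⟩
  · intro t ht ht'
    have := (hG (t : EReal)).2
    have := (hF ((t+1 : ℝ) : EReal)).1
    linarith
  · intro t ht ht'
    have := (hF (t : EReal)).2
    have := (hG ((t+1 : ℝ) : EReal)).1
    linarith

lemma levySet_bddBelow (F G : EReal → ℝ) : BddBelow (levySet F G) :=
  ⟨0, fun h hh => le_of_lt hh.1⟩

/-- Key inequality: `d_L(f(x),f(y)) ≤ max(d_L(D(x,y)⋆f(x), f(x)), d_L(D(x,y)⋆f(y), f(y)))`
for a probabilistic 1-Lipschitz map `f`. -/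
theorem stmt13 {G : Type} (M : PMSpace G) (hc : StarContinuous M.star)
    (f : G → EReal → ℝ) (hf : PLip M f) (x y : G) :
    dL (f x) (f y) ≤
      max (dL (M.star (M.D x y) (f x)) (f x)) (dL (M.star (M.D x y) (f y)) (f y)) := by
  set A := M.star (M.D x y) (f x) with hA
  set B := M.star (M.D x y) (f y) with hB
  have hAdf : IsDistFun A := M.star_tri.1 _ _ (M.D_mem x y) (hf.1 x)
  have hBdf : IsDistFun B := M.star_tri.1 _ _ (M.D_mem x y) (hf.1 y)
  have hfx : IsDistFun (f x) := hf.1 x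
  have hfy : IsDistFun (f y) := hf.1 y
  have hBfx : B ≤ f x := hf.2 x y
  have hAfy : A ≤ f y := by
    have := hf.2 y x
    rwa [M.D_symm y x] at this
  have hS1ne : (levySet A (f x)).Nonempty := ⟨1, one_mem_levySet hAdf.2.1 hfx.2.1⟩
  have hS2ne : (levySet B (f y)).Nonempty := ⟨1, one_mem_levySet hBdf.2.1 hfy.2.1⟩
  refine le_of_forall_pos_le_add (fun ε hε => ?_)
  obtain ⟨h₁, hh₁, hh₁lt⟩ := Real.lt_sInf_add_pos hS1ne hε
  obtain ⟨h₂, hh₂, hh₂lt⟩ := Real.lt_sInf_add_pos hS2ne hε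
  set h := max h₁ h₂ with hhdef
  have hmem : h ∈ levySet (f x) (f y) := by
    refine ⟨lt_max_of_lt_left hh₁.1, max_le hh₁.2.1 hh₂.2.1, ?_, ?_⟩
    · -- levyCond (f x) (f y) h : f y t ≤ f x (t+h)+h, from levyCond B (f y) h₂
      exact levyCond_of_le hBfx
        (levyCond_mono hBdf.1 hh₂.1 (le_max_right _ _) hh₂.2.2.1)
    · exact levyCond_of_le hAfy
        (levyCond_mono hAdf.1 hh₁.1 (le_max_left _ _) hh₁.2.2.1)
  have hle : dL (f x) (f y) ≤ h := csInf_le (levySet_bddBelow _ _) hmem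
  have : h ≤ max (dL A (f x)) (dL B (f y)) + ε := by
    rcases max_cases h₁ h₂ with ⟨heq, _⟩ | ⟨heq, _⟩ <;> rw [hhdef, heq]
    · exact le_trans hh₁lt.le (add_le_add_left (le_max_left _ _) ε)
    · exact le_trans hh₂lt.le (add_le_add_left (le_max_right _ _) ε)
  exact le_trans hle this
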